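/- Let V be a ℂ-vector space, B : V × V → ℂ an alternating bilinear form, and ω a smooth V-valued function of z satisfying B(ω,ω^{(k)}) = 0 for k = 0,1,2 identically. Suppose ω satisfies the fourth-order linear ODE ω'''' + C_3(z)ω''' + C_2(z)ω'' + C_1(z)ω' + C_0(z)ω = 0. Then the Yukawa coupling W_3(z) := B(ω(z), ω'''(z)) satisfies the first-order ODE W_3'(z) = -(1/2)·C_3(z)·W_3(z). -/

import Mathlib

open Metric Set

section aux
variable {V : Type*} [NormedAddCommGroup V] [NormedSpace ℂ V]

lemma aux_smooth_iter {f : ℂ → V} {U : Set ℂ} (hU : IsOpen U)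
    (hf : ContDiffOn ℂ ⊤ f U) (m : ℕ) :
    ContDiffOn ℂ ((⊤:ℕ∞) : WithTop ℕ∞) (iteratedDeriv m f) U := by
  induction m with
  | zero => simpa [iteratedDeriv_zero] using hf.of_le le_top
  | succ m ih =>
      rw [iteratedDeriv_succ]
      exact ((contDiffOn_infty_iff_deriv_of_isOpen hU).1 ih).2

lemma aux_hasDerivAt_iter {f : ℂ → V} {U : Set ℂ} (hU : IsOpen U)
    (hf : ContDiffOn ℂ ⊤ f U) (m : ℕ) {z : ℂ} (hz : z ∈ U) :
    HasDerivAt (iteratedDeriv m f) (iteratedDeriv (m + 1) f z) z := by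
  have hd : DifferentiableAt ℂ (iteratedDeriv m f) z := by
    have := ((contDiffOn_infty_iff_deriv_of_isOpen hU).1 (aux_smooth_iter hU hf m)).1
    exact this.differentiableAt (hU.mem_nhds hz)
  simpa [iteratedDeriv_succ] using hd.hasDerivAt

lemma aux_hasDerivAt_clm {f : ℂ → V} {U : Set ℂ} (hU : IsOpen U)
    (hf : ContDiffOn ℂ ⊤ f U) (φ : V →L[ℂ] ℂ) (m : ℕ) {z : ℂ} (hz : z ∈ U) :
    HasDerivAt (fun w => φ (iteratedDeriv m f w)) (φ (iteratedDeriv (m + 1) f z)) z :=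
  (φ.hasFDerivAt.comp_hasDerivAt z (aux_hasDerivAt_iter hU hf m hz))

lemma aux_iteratedDeriv_clm {f : ℂ → V} {U : Set ℂ} (hU : IsOpen U)
    (hf : ContDiffOn ℂ ⊤ f U) (φ : V →L[ℂ] ℂ) (m : ℕ) {z : ℂ} (hz : z ∈ U) :
    iteratedDeriv m (fun w => φ (f w)) z = φ (iteratedDeriv m f z) := by
  induction m generalizing z with
  | zero => simp [iteratedDeriv_zero]
  | succ m ih =>
      rw [iteratedDeriv_succ]
      have hev : (iteratedDeriv m fun w => φ (f w)) =ᶠ[nhds z]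
          fun w => φ (iteratedDeriv m f w) :=
        Filter.eventually_of_mem (hU.mem_nhds hz) fun w hw => ih hw
      rw [hev.deriv_eq]
      exact (aux_hasDerivAt_clm hU hf φ m hz).deriv

lemma aux_biorth {n : ℕ} {s : Fin n → V} (hs : LinearIndependent ℂ s) :
    ∃ φ : Fin n → (V →L[ℂ] ℂ), ∀ i k, φ i (s k) = if i = k then 1 else 0 := by
  set S : Submodule ℂ V := Submodule.span ℂ (Set.range s) with hS
  haveI : FiniteDimensional ℂ S := FiniteDimensional.span_of_finite ℂ (Set.finite_range s)
  let b : Module.Basis (Fin n) ℂ S := Module.Basis.span hs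
  have key : ∀ i : Fin n, ∃ g : V →L[ℂ] ℂ,
      ∀ x : S, g x = (LinearMap.toContinuousLinearMap (b.coord i)) x := by
    intro i
    obtain ⟨g, hg, -⟩ := exists_extension_norm_eq S (LinearMap.toContinuousLinearMap (b.coord i))
    exact ⟨g, hg⟩
  choose φ hφ using key
  refine ⟨φ, fun i k => ?_⟩
  have hmem : s k ∈ S := Submodule.subset_span ⟨k, rfl⟩
  have h1 : φ i (s k) = (b.coord i) ⟨s k, hmem⟩ := by
    have := hφ i ⟨s k, hmem⟩
    simpa using this
  have h2 : (⟨s k, hmem⟩ : S) = b k := by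
    apply Subtype.ext
    exact congrArg Subtype.val (Module.Basis.span_apply hs k).symm
  rw [h1, h2, Module.Basis.coord_apply, b.repr_self]
  simp [Finsupp.single_apply, eq_comm]

lemma aux_sep {n : ℕ} {s : Fin n → V} (hs : LinearIndependent ℂ s) {x : V}
    (hx : ∀ φ : V →L[ℂ] ℂ, (∀ k, φ (s k) = 0) → φ x = 0) :
    x ∈ Submodule.span ℂ (Set.range s) := by
  by_contra hmem
  have hcons : LinearIndependent ℂ (Fin.cons x s : Fin (n+1) → V) :=
    linearIndependent_fin_cons.2 ⟨hs, hmem⟩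
  obtain ⟨φ, hφ⟩ := aux_biorth hcons
  have h0 : φ 0 x = 1 := by simpa using hφ 0 0
  have hk : ∀ k, (φ 0) (s k) = 0 := by
    intro k
    have := hφ 0 k.succ
    simpa [Fin.succ_ne_zero, (Fin.succ_ne_zero k).symm] using this
  have := hx (φ 0) hk
  rw [h0] at this
  exact one_ne_zero this

lemma aux_det_diff {r : ℕ} {F : ℂ → Matrix (Fin r) (Fin r) ℂ} {w : ℂ}
    (h : ∀ i k, DifferentiableAt ℂ (fun z => F z i k) w) :
    DifferentiableAt ℂ (fun z => (F z).det) w := by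
  simp only [Matrix.det_apply']
  exact DifferentiableAt.fun_sum fun σ _ =>
    ((DifferentiableAt.fun_finsetProd (fun i _ => h (σ i) i)).const_mul _)

lemma aux_mulVec_inj {r : ℕ} {A : Matrix (Fin r) (Fin r) ℂ} (hA : A.det ≠ 0)
    {a b : Fin r → ℂ} (h : A.mulVec a = A.mulVec b) : a = b :=
  Matrix.mulVec_injective_iff_isUnit.2 (A.isUnit_iff_isUnit_det.2 (isUnit_iff_ne_zero.2 hA)) h

set_option maxHeartbeats 2000000 in
/-- Local structure: near each point, all iterated derivatives of `f` live in one
finite-dimensional subspace, with a biorthogonal expansion by continuous functionals. -/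
lemma aux_local {f : ℂ → V} {U : Set ℂ} (hU : IsOpen U) (hf : ContDiffOn ℂ ⊤ f U)
    (hode : ∀ z ∈ U, iteratedDeriv 4 f z ∈
      Submodule.span ℂ (Set.range fun l : Fin 4 => iteratedDeriv (l : ℕ) f z))
    {z₀ : ℂ} (hz₀ : z₀ ∈ U) :
    ∃ (n : ℕ) (s : Fin n → V) (φ : Fin n → (V →L[ℂ] ℂ)) (ε : ℝ), 0 < ε ∧ ball z₀ ε ⊆ U ∧
      ∀ w ∈ ball z₀ ε, ∀ m : ℕ,
        iteratedDeriv m f w = ∑ k, φ k (iteratedDeriv m f w) • s k := by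
  obtain ⟨δ, hδpos, hδU⟩ := Metric.isOpen_iff.1 hU z₀ hz₀
  set N : Set ℂ := ball z₀ (δ/4) with hN
  have hNopen : IsOpen N := isOpen_ball
  have hNU : N ⊆ U := fun w hw => hδU (mem_ball.2 (lt_trans (mem_ball.1 hw) (by linarith)))
  set Sig : ℂ → Submodule ℂ V :=
    fun w => Submodule.span ℂ (Set.range fun l : Fin 4 => iteratedDeriv (l : ℕ) f w) with hSig
  have hSigFin : ∀ w, FiniteDimensional ℂ (Sig w) :=
    fun w => FiniteDimensional.span_of_finite ℂ (Set.finite_range _)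
  haveI := hSigFin
  set ρ : ℂ → ℕ := fun w => Module.finrank ℂ (Sig w) with hρ
  have hρbd : ∀ w, ρ w ≤ 4 := by
    intro w
    classical
    have h1 := finrank_span_le_card (R := ℂ)
      (Set.range fun l : Fin 4 => iteratedDeriv (l : ℕ) f w)
    refine h1.trans ?_
    rw [Set.toFinset_range]
    exact (Finset.card_image_le).trans (by simp)
  -- maximum of ρ on N
  have hmax : ∃ z₁ ∈ N, ∀ w ∈ N, ρ w ≤ ρ z₁ := by
    have hne : (ρ '' N).Nonempty := ⟨ρ z₀, ⟨z₀, mem_ball_self (by linarith), rfl⟩⟩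
    have hbdd : BddAbove (ρ '' N) := ⟨4, fun x ⟨w, _, hw⟩ => hw ▸ hρbd w⟩
    obtain ⟨z₁, hz₁N, hz₁⟩ := Nat.sSup_mem hne hbdd
    exact ⟨z₁, hz₁N, fun w hw => hz₁ ▸ le_csSup hbdd ⟨w, hw, rfl⟩⟩
  obtain ⟨z₁, hz₁N, hz₁max⟩ := hmax
  -- extract an independent spanning subfamily at z₁
  classical
  obtain ⟨t, hts, hspan, hli⟩ :=
    exists_linearIndependent ℂ (Set.range fun l : Fin 4 => iteratedDeriv (l : ℕ) f z₁)
  have htfin : t.Finite := (Set.finite_range _).subset hts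
  haveI : Fintype ↥t := htfin.fintype
  set n := Fintype.card ↥t with hn
  let e : ↥t ≃ Fin n := Fintype.equivFin ↥t
  set s : Fin n → V := fun k => ((e.symm k : ↥t) : V) with hs
  have hsli : LinearIndependent ℂ s := hli.comp e.symm e.symm.injective
  have hrange : Set.range s = t := by
    have : Set.range s = Set.range ((↑) : ↥t → V) :=
      Function.Surjective.range_comp e.symm.surjective _
    rw [this, Subtype.range_coe]
  have hjex : ∀ k : Fin n, ∃ l : Fin 4, iteratedDeriv (l : ℕ) f z₁ = s k := by
    intro k
    have : s k ∈ t := by rw [← hrange]; exact ⟨k, rfl⟩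
    exact hts this
  choose j hj using hjex
  obtain ⟨φ, hφ⟩ := aux_biorth hsli
  set M : ℂ → Matrix (Fin n) (Fin n) ℂ :=
    fun w => Matrix.of fun i k => φ i (iteratedDeriv ((j k : Fin 4) : ℕ) f w) with hM
  -- M is pointwise differentiable on U in each entry
  have hMdiff : ∀ i k, ∀ z ∈ U, DifferentiableAt ℂ (fun w => M w i k) z := by
    intro i k z hz
    exact (aux_hasDerivAt_clm hU hf (φ i) _ hz).differentiableAt
  set A : Set ℂ := N ∩ {w | (M w).det ≠ 0} with hA
  have hAopen : IsOpen A := by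
    have hcont : ContinuousOn (fun w => (M w).det) N := by
      intro w hw
      exact (aux_det_diff (fun i k => hMdiff i k w (hNU hw))).continuousAt.continuousWithinAt
    exact hcont.isOpen_inter_preimage hNopen isOpen_compl_singleton
  have hAN : A ⊆ N := inter_subset_left
  have hAU : A ⊆ U := fun w hw => hNU (hAN hw)
  have hz₁A : z₁ ∈ A := by
    refine ⟨hz₁N, ?_⟩
    have hM1 : M z₁ = 1 := by
      ext i k
      show φ i (iteratedDeriv ((j k : Fin 4) : ℕ) f z₁) = _
      rw [hj k, hφ i k, Matrix.one_apply]
    simp [hM1]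
  set P : ℂ → Submodule ℂ V :=
    fun w => Submodule.span ℂ (Set.range fun k => iteratedDeriv ((j k : Fin 4) : ℕ) f w) with hP
  -- key independence and span facts on A
  have hindep : ∀ w ∈ A, LinearIndependent ℂ (fun k => iteratedDeriv ((j k : Fin 4) : ℕ) f w) := by
    intro w hw
    rw [Fintype.linearIndependent_iff]
    intro g hg i
    have happ : ∀ i', (M w).mulVec g i' = 0 := by
      intro i'
      have := congrArg (φ i') hg
      simpa [hM, map_sum, Matrix.mulVec, dotProduct, mul_comm] using this
    have : (M w).mulVec g = (M w).mulVec 0 := by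
      funext i'; rw [happ i', Matrix.mulVec_zero]; rfl
    have := aux_mulVec_inj hw.2 this
    exact congrFun this i
  have hPSig : ∀ w ∈ A, P w = Sig w := by
    intro w hw
    have hle : P w ≤ Sig w := by
      rw [hP, hSig]
      apply Submodule.span_le.2
      rintro x ⟨k, rfl⟩
      exact Submodule.subset_span ⟨j k, rfl⟩
    haveI : FiniteDimensional ℂ (Sig w) := hSigFin w
    apply Submodule.eq_of_le_of_finrank_le hle
    have h1 : Module.finrank ℂ (P w) = n := by
      rw [hP]; rw [finrank_span_eq_card (hindep w hw), Fintype.card_fin]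
    have h2 : Module.finrank ℂ (Sig z₁) = n := by
      have : Sig z₁ = Submodule.span ℂ (Set.range s) := by rw [hSig, hrange, hspan]
      rw [this, finrank_span_eq_card hsli, Fintype.card_fin]
    rw [h1]
    have := hz₁max w (hAN hw)
    rw [hρ] at this
    simpa [h2] using this
  have hkey : ∀ w ∈ A, ∀ l : ℕ, l ≤ 4 → iteratedDeriv l f w ∈ P w := by
    intro w hw l hl
    rcases Nat.lt_or_ge l 4 with h4 | h4
    · rw [hPSig w hw]
      exact Submodule.subset_span ⟨⟨l, h4⟩, rfl⟩
    · have : l = 4 := le_antisymm hl h4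
      subst this
      rw [hPSig w hw]
      exact hode w (hAU hw)
  -- all iterated derivatives stay in the moving span on A
  have hQ : ∀ m : ℕ, ∀ w ∈ A, iteratedDeriv m f w ∈ P w := by
    intro m
    induction m with
    | zero => exact fun w hw => hkey w hw 0 (by norm_num)
    | succ m ih =>
        intro w hw
        -- Cramer coefficients
        set c : ℂ → Fin n → ℂ := fun z k =>
          ((M z).det)⁻¹ * ((M z).updateCol k fun i => φ i (iteratedDeriv m f z)).det with hc
        have hrep : ∀ z ∈ A, iteratedDeriv m f z
            = ∑ k, c z k • iteratedDeriv ((j k : Fin 4) : ℕ) f z := by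
          intro z hz
          obtain ⟨b, hb⟩ := (Submodule.mem_span_range_iff_exists_fun ℂ).1 (ih z hz)
          have hcb : c z = b := by
            have h1 : (fun i => φ i (iteratedDeriv m f z)) = (M z).mulVec b := by
              funext i
              rw [← hb]
              simp only [map_sum, map_smul, smul_eq_mul, Matrix.mulVec, dotProduct]
              exact Finset.sum_congr rfl fun x _ => mul_comm _ _
            have h2 : c z = ((M z).det)⁻¹ • Matrix.cramer (M z) ((M z).mulVec b) := by
              funext k
              rw [hc]
              simp [h1, Matrix.cramer_apply, smul_eq_mul]
            have h3 : (M z).mulVec (c z) = (M z).mulVec b := by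
              rw [h2]
              rw [Matrix.mulVec_smul, Matrix.mulVec_cramer]
              funext i
              simp only [Pi.smul_apply, smul_eq_mul]
              rw [← mul_assoc, inv_mul_cancel₀ hz.2, one_mul]
            exact aux_mulVec_inj hz.2 h3
          rw [← hb, hcb]
        have hcdiff : ∀ k, DifferentiableAt ℂ (fun z => c z k) w := by
          intro k
          have hdet : DifferentiableAt ℂ (fun z => (M z).det) w :=
            aux_det_diff fun i k' => hMdiff i k' w (hAU hw)
          have hupd : DifferentiableAt ℂ
              (fun z => ((M z).updateCol k fun i => φ i (iteratedDeriv m f z)).det) w := by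
            apply aux_det_diff
            intro i k'
            by_cases hkk : k' = k
            · subst hkk
              simp only [Matrix.updateCol_apply, if_pos rfl]
              exact (aux_hasDerivAt_clm hU hf (φ i) m (hAU hw)).differentiableAt
            · simp only [Matrix.updateCol_apply, if_neg hkk]
              exact hMdiff i k' w (hAU hw)
          exact (hdet.inv hw.2).mul hupd
        -- differentiate the representation
        have hR : HasDerivAt (fun z => ∑ k, c z k • iteratedDeriv ((j k : Fin 4) : ℕ) f z)
            (∑ k, (c w k • iteratedDeriv (((j k : Fin 4) : ℕ) + 1) f w
              + deriv (fun z => c z k) w • iteratedDeriv ((j k : Fin 4) : ℕ) f w)) w := by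
          apply HasDerivAt.fun_sum
          intro k _
          exact ((hcdiff k).hasDerivAt).smul (aux_hasDerivAt_iter hU hf _ (hAU hw))
        have hL : HasDerivAt (iteratedDeriv m f) (iteratedDeriv (m+1) f w) w :=
          aux_hasDerivAt_iter hU hf m (hAU hw)
        have hev : iteratedDeriv m f =ᶠ[nhds w]
            (fun z => ∑ k, c z k • iteratedDeriv ((j k : Fin 4) : ℕ) f z) :=
          Filter.eventually_of_mem (hAopen.mem_nhds hw) fun z hz => hrep z hz
        have hL' : HasDerivAt (iteratedDeriv m f)
            (∑ k, (c w k • iteratedDeriv (((j k : Fin 4) : ℕ) + 1) f w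
              + deriv (fun z => c z k) w • iteratedDeriv ((j k : Fin 4) : ℕ) f w)) w :=
          hR.congr_of_eventuallyEq hev
        have heq := hL.unique hL'
        rw [heq]
        apply Submodule.sum_mem
        intro k _
        apply Submodule.add_mem
        · refine Submodule.smul_mem _ _ (hkey w hw _ ?_)
          have := (j k).is_le
          omega
        · exact Submodule.smul_mem _ _ (Submodule.subset_span ⟨k, rfl⟩)
  -- transport: on N, all iterated derivatives lie in span of s
  have hball : ball z₁ (δ/2) ⊆ U := by
    intro x hx
    apply hδU
    have h1 : dist x z₀ ≤ dist x z₁ + dist z₁ z₀ := dist_triangle _ _ _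
    have h2 : dist z₁ z₀ < δ/4 := mem_ball.1 hz₁N
    have h3 : dist x z₁ < δ/2 := mem_ball.1 hx
    exact mem_ball.2 (by linarith)
  have hNball : N ⊆ ball z₁ (δ/2) := by
    intro x hx
    have h1 : dist x z₁ ≤ dist x z₀ + dist z₀ z₁ := dist_triangle _ _ _
    have h2 : dist x z₀ < δ/4 := mem_ball.1 hx
    have h3 : dist z₀ z₁ < δ/4 := by rw [dist_comm]; exact mem_ball.1 hz₁N
    exact mem_ball.2 (by linarith)
  have htrans : ∀ w ∈ N, ∀ m : ℕ, iteratedDeriv m f w ∈ Submodule.span ℂ (Set.range s) := by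
    intro w hw m
    apply aux_sep hsli
    intro ψ hψ
    -- ψ kills the span of s, hence all derivatives at z₁
    have hψspan : ∀ x ∈ Submodule.span ℂ (Set.range s), ψ x = 0 := by
      intro x hx
      obtain ⟨b, hb⟩ := (Submodule.mem_span_range_iff_exists_fun ℂ).1 hx
      rw [← hb]
      simp [map_sum, hψ]
    have hz₁vanish : ∀ m', ψ (iteratedDeriv m' f z₁) = 0 := by
      intro m'
      apply hψspan
      have hm' := hQ m' z₁ hz₁A
      have hfun : (fun k => iteratedDeriv ((j k : Fin 4) : ℕ) f z₁) = s := funext hj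
      have : P z₁ = Submodule.span ℂ (Set.range s) := by
        show Submodule.span ℂ (Set.range fun k => iteratedDeriv ((j k : Fin 4) : ℕ) f z₁) = _
        rw [hfun]
      rwa [this] at hm'
    -- the scalar function ψ ∘ f vanishes identically on the ball around z₁
    set g : ℂ → ℂ := fun z => ψ (f z) with hg
    have hgdiff : DifferentiableOn ℂ g (ball z₁ (δ/2)) :=
      ψ.differentiable.comp_differentiableOn ((hf.differentiableOn (by simp)).mono hball)
    have hgiter : ∀ m', iteratedDeriv m' g z₁ = 0 := by
      intro m'
      rw [aux_iteratedDeriv_clm hU hf ψ m' (hball (mem_ball_self (by linarith)))]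
      exact hz₁vanish m'
    have hgzero : ∀ x ∈ ball z₁ (δ/2), g x = 0 := by
      intro x hx
      rw [← Complex.taylorSeries_eq_on_ball' hx hgdiff]
      simp [hgiter]
    have hgiterzero : ∀ m', ∀ x ∈ ball z₁ (δ/2), iteratedDeriv m' g x = 0 := by
      intro m'
      induction m' with
      | zero => intro x hx; simpa [iteratedDeriv_zero] using hgzero x hx
      | succ m' ih =>
          intro x hx
          rw [iteratedDeriv_succ]
          have hev : iteratedDeriv m' g =ᶠ[nhds x] (fun _ => (0:ℂ)) :=
            Filter.eventually_of_mem (isOpen_ball.mem_nhds hx) fun y hy => ih y hy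
          rw [hev.deriv_eq, deriv_const]
      
    have := hgiterzero m w (hNball hw)
    rwa [aux_iteratedDeriv_clm hU hf ψ m (hNU hw)] at this
  -- conclusion with biorthogonal expansion
  refine ⟨n, s, φ, δ/4, by linarith, hNU, ?_⟩
  intro w hw m
  obtain ⟨b, hb⟩ := (Submodule.mem_span_range_iff_exists_fun ℂ).1 (htrans w hw m)
  have hbk : ∀ k, φ k (iteratedDeriv m f w) = b k := by
    intro k
    rw [← hb]
    simp [map_sum, hφ]
  calc iteratedDeriv m f w = ∑ i, b i • s i := hb.symm
    _ = ∑ k, φ k (iteratedDeriv m f w) • s k :=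
        Finset.sum_congr rfl fun k _ => by rw [hbk k]

end aux

set_option maxHeartbeats 1000000 in
theorem stmt_6 (V : Type*) [NormedAddCommGroup V] [NormedSpace ℂ V]
    (B : V →ₗ[ℂ] V →ₗ[ℂ] ℂ) (halt : ∀ v : V, B v v = 0)
    (U : Set ℂ) (hU : IsOpen U)
    (ω : ℂ → V) (C₀ C₁ C₂ C₃ : ℂ → ℂ)
    (hω : ContDiffOn ℂ ⊤ ω U)
    (h0 : ∀ z ∈ U, B (ω z) (ω z) = 0)
    (h1 : ∀ z ∈ U, B (ω z) (iteratedDeriv 1 ω z) = 0)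
    (h2 : ∀ z ∈ U, B (ω z) (iteratedDeriv 2 ω z) = 0)
    (hODE : ∀ z ∈ U,
      iteratedDeriv 4 ω z + C₃ z • iteratedDeriv 3 ω z + C₂ z • iteratedDeriv 2 ω z +
        C₁ z • iteratedDeriv 1 ω z + C₀ z • ω z = 0) :
    ∀ z ∈ U, deriv (fun w => B (ω w) (iteratedDeriv 3 ω w)) z =
      -(1 / 2) * C₃ z * B (ω z) (iteratedDeriv 3 ω z) := by
  have h4eq : ∀ z ∈ U, iteratedDeriv 4 ω z =
      -(C₃ z • iteratedDeriv 3 ω z + (C₂ z • iteratedDeriv 2 ω z +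
        (C₁ z • iteratedDeriv 1 ω z + C₀ z • ω z))) := by
    intro z hz
    apply eq_neg_of_add_eq_zero_left
    rw [← hODE z hz]
    abel
  have hode : ∀ z ∈ U, iteratedDeriv 4 ω z ∈
      Submodule.span ℂ (Set.range fun l : Fin 4 => iteratedDeriv (l : ℕ) ω z) := by
    intro z hz
    rw [h4eq z hz]
    have mem3 : iteratedDeriv 3 ω z ∈
        Submodule.span ℂ (Set.range fun l : Fin 4 => iteratedDeriv (l : ℕ) ω z) :=
      Submodule.subset_span ⟨(3 : Fin 4), rfl⟩
    have mem2 : iteratedDeriv 2 ω z ∈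
        Submodule.span ℂ (Set.range fun l : Fin 4 => iteratedDeriv (l : ℕ) ω z) :=
      Submodule.subset_span ⟨(2 : Fin 4), rfl⟩
    have mem1 : iteratedDeriv 1 ω z ∈
        Submodule.span ℂ (Set.range fun l : Fin 4 => iteratedDeriv (l : ℕ) ω z) :=
      Submodule.subset_span ⟨(1 : Fin 4), rfl⟩
    have mem0 : ω z ∈
        Submodule.span ℂ (Set.range fun l : Fin 4 => iteratedDeriv (l : ℕ) ω z) := by
      have : iteratedDeriv 0 ω z ∈
          Submodule.span ℂ (Set.range fun l : Fin 4 => iteratedDeriv (l : ℕ) ω z) :=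
        Submodule.subset_span ⟨(0 : Fin 4), rfl⟩
      rwa [iteratedDeriv_zero] at this
    exact Submodule.neg_mem _ (Submodule.add_mem _ (Submodule.smul_mem _ _ mem3)
      (Submodule.add_mem _ (Submodule.smul_mem _ _ mem2)
        (Submodule.add_mem _ (Submodule.smul_mem _ _ mem1) (Submodule.smul_mem _ _ mem0))))
  intro z hz
  obtain ⟨n, s, φ, ε, hε, hεU, hexp⟩ := aux_local hU hω hode hz
  have hzball : z ∈ ball z ε := mem_ball_self hε
  set F : ℕ → ℕ → ℂ → ℂ := fun a b w =>
    ∑ i, ∑ k, (φ i) (iteratedDeriv a ω w) * (φ k) (iteratedDeriv b ω w) * B (s i) (s k) with hF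
  have hBsum : ∀ x y : Fin n → ℂ,
      B (∑ i, x i • s i) (∑ k, y k • s k) = ∑ i, ∑ k, x i * y k * B (s i) (s k) := by
    intro x y
    have hfst : B (∑ i, x i • s i) = ∑ i, x i • B (s i) := by
      rw [map_sum]
      exact Finset.sum_congr rfl fun i _ => by rw [map_smul]
    rw [hfst, LinearMap.sum_apply]
    refine Finset.sum_congr rfl fun i _ => ?_
    rw [LinearMap.smul_apply, map_sum, smul_eq_mul, Finset.mul_sum]
    refine Finset.sum_congr rfl fun k _ => ?_
    rw [map_smul, smul_eq_mul]
    ring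
  have claimBF : ∀ a b : ℕ, ∀ w ∈ ball z ε,
      B (iteratedDeriv a ω w) (iteratedDeriv b ω w) = F a b w := by
    intro a b w hw
    conv_lhs => rw [hexp w hw a, hexp w hw b]
    exact hBsum _ _
  have claimD : ∀ a b : ℕ, ∀ w ∈ ball z ε,
      HasDerivAt (F a b) (F (a+1) b w + F a (b+1) w) w := by
    intro a b w hw
    have hw' : w ∈ U := hεU hw
    have h1' : HasDerivAt (fun w' =>
        ∑ i, ∑ k, (φ i) (iteratedDeriv a ω w') * (φ k) (iteratedDeriv b ω w') * B (s i) (s k))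
        (∑ i, ∑ k, ((φ i) (iteratedDeriv (a+1) ω w) * (φ k) (iteratedDeriv b ω w)
          + (φ i) (iteratedDeriv a ω w) * (φ k) (iteratedDeriv (b+1) ω w)) * B (s i) (s k)) w := by
      apply HasDerivAt.fun_sum
      intro i _
      apply HasDerivAt.fun_sum
      intro k _
      exact ((aux_hasDerivAt_clm hU hω (φ i) a hw').mul
        (aux_hasDerivAt_clm hU hω (φ k) b hw')).mul_const _
    have hval : F (a+1) b w + F a (b+1) w =
        ∑ i, ∑ k, ((φ i) (iteratedDeriv (a+1) ω w) * (φ k) (iteratedDeriv b ω w)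
          + (φ i) (iteratedDeriv a ω w) * (φ k) (iteratedDeriv (b+1) ω w)) * B (s i) (s k) := by
      rw [hF]
      simp only [add_mul, Finset.sum_add_distrib]
    rw [hval]
    exact h1'
  have claim02 : ∀ w ∈ ball z ε, F 0 2 w = 0 := by
    intro w hw
    rw [← claimBF 0 2 w hw]
    have := h2 w (hεU hw)
    rwa [show iteratedDeriv 0 ω w = ω w from by rw [iteratedDeriv_zero]]
  have claim1203 : ∀ w ∈ ball z ε, F 1 2 w + F 0 3 w = 0 := by
    intro w hw
    have hd := claimD 0 2 w hw
    have hev : F 0 2 =ᶠ[nhds w] fun _ => (0:ℂ) :=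
      Filter.eventually_of_mem (isOpen_ball.mem_nhds hw) fun y hy => claim02 y hy
    rw [← hd.deriv, hev.deriv_eq, deriv_const]
  have claimG : HasDerivAt (fun w => F 1 2 w + F 0 3 w)
      ((F 2 2 z + F 1 3 z) + (F 1 3 z + F 0 4 z)) z :=
    (claimD 1 2 z hzball).add (claimD 0 3 z hzball)
  have claimG0 : (F 2 2 z + F 1 3 z) + (F 1 3 z + F 0 4 z) = 0 := by
    have hev : (fun w => F 1 2 w + F 0 3 w) =ᶠ[nhds z] fun _ => (0:ℂ) :=
      Filter.eventually_of_mem (isOpen_ball.mem_nhds hzball) fun y hy => claim1203 y hy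
    rw [← claimG.deriv, hev.deriv_eq, deriv_const]
  have claim22 : F 2 2 z = 0 := by
    rw [← claimBF 2 2 z hzball]
    exact halt _
  have claim04 : F 0 4 z = -(C₃ z * B (ω z) (iteratedDeriv 3 ω z)) := by
    rw [← claimBF 0 4 z hzball]
    rw [show iteratedDeriv 0 ω z = ω z from by rw [iteratedDeriv_zero]]
    rw [h4eq z hz]
    rw [map_neg, map_add, map_add, map_add, map_smul, map_smul, map_smul, map_smul]
    rw [smul_eq_mul, smul_eq_mul, smul_eq_mul, smul_eq_mul]
    rw [h1 z hz, h2 z hz, h0 z hz]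
    ring
  have hWev : (fun w => B (ω w) (iteratedDeriv 3 ω w)) =ᶠ[nhds z] F 0 3 := by
    refine Filter.eventually_of_mem (isOpen_ball.mem_nhds hzball) fun w hw => ?_
    rw [← claimBF 0 3 w hw]
    rw [show iteratedDeriv 0 ω w = ω w from by rw [iteratedDeriv_zero]]
  rw [hWev.deriv_eq, (claimD 0 3 z hzball).deriv]
  have hW : F 0 3 z = B (ω z) (iteratedDeriv 3 ω z) := by
    rw [← claimBF 0 3 z hzball]
    rw [show iteratedDeriv 0 ω z = ω z from by rw [iteratedDeriv_zero]]
  linear_combination (1/2 : ℂ) * claimG0 - (1/2 : ℂ) * claim22 + (1/2 : ℂ) * claim04
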